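/- Let G be a connected graph of order n. Then edim(G) ≥ n-2 if and only if for every triple of vertices from V(G) there exists an ordering v_1, v_2, v_3 of the triple such that either (1) v_3 is adjacent to both v_1 and v_2 and every non-mutual neighbor of v_1, v_2 is adjacent to v_3, or (2) there exists u ∈ V(G)∖{v_1,v_2,v_3} adjacent to both v_1 and v_2 such that every non-mutual neighbor of v_1, v_2 in V(G)∖{v_1,v_2,v_3} is adjacent to u, and every x ∈ V(G)∖{v_1,v_2,v_3} with d(x,v_2) > d(x,v_1) = 2 or d(x,v_1) > d(x,v_2) = 2 satisfies d(x,u) ≤ 2. -/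

import Mathlib

open SimpleGraph Finset

/-- Distance from an edge (as an unordered pair) to a vertex: the minimum
of the distances from the two endpoints. -/
noncomputable def edgeVertexDist {V : Type*} (G : SimpleGraph V) (e : Sym2 V) (v : V) : ℕ :=
  Sym2.lift ⟨fun x y => min (G.dist x v) (G.dist y v), fun x y => by
    simp [min_comm]⟩ e

/-- `S` is a resolving set for the vertices of `G`. -/
def IsResolvingSet {V : Type*} (G : SimpleGraph V) (S : Set V) : Prop :=
  ∀ u w : V, (∀ s ∈ S, G.dist u s = G.dist w s) → u = w

/-- `S` is a resolving set for the edges of `G`. -/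
def IsEdgeResolvingSet {V : Type*} (G : SimpleGraph V) (S : Set V) : Prop :=
  ∀ e ∈ G.edgeSet, ∀ f ∈ G.edgeSet,
    (∀ s ∈ S, edgeVertexDist G e s = edgeVertexDist G f s) → e = f

/-- The metric dimension of `G`. -/
noncomputable def metricDim {V : Type*} (G : SimpleGraph V) : ℕ :=
  sInf {k | ∃ S : Finset V, S.card = k ∧ IsResolvingSet G (S : Set V)}

/-- The edge metric dimension of `G`. -/
noncomputable def edgeMetricDim {V : Type*} (G : SimpleGraph V) : ℕ :=
  sInf {k | ∃ S : Finset V, S.card = k ∧ IsEdgeResolvingSet G (S : Set V)}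


section AuxEdim
variable {V : Type*} {G : SimpleGraph V}


lemma adj_dist_le {u v : V} (h : G.Adj u v) : G.dist u v ≤ 1 :=
  (dist_eq_one_iff_adj.mpr h).le

lemma exists_pred (hG : G.Connected) {x v : V} {k : ℕ} (h : G.dist x v = k + 1) :
    ∃ y, G.Adj y v ∧ G.dist x y = k := by
  obtain ⟨p, hp⟩ := hG.exists_walk_length_eq_dist v x
  rw [SimpleGraph.dist_comm (u := v) (v := x), h] at hp
  cases p with
  | nil => simp at hp
  | @cons _ y _ hadj q =>
    refine ⟨y, hadj.symm, ?_⟩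
    simp only [Walk.length_cons] at hp
    have h1 : G.dist x y ≤ k := by
      have := SimpleGraph.dist_le q.reverse
      simp only [Walk.length_reverse] at this
      omega
    have h2 : G.dist x v ≤ G.dist x y + 1 :=
      le_trans (hG.dist_triangle (v := y)) (by have := adj_dist_le hadj.symm; omega)
    omega

lemma exists_pred2 (hG : G.Connected) {x v : V} {k : ℕ} (h : G.dist x v = k + 3) :
    ∃ y z, G.Adj y v ∧ G.dist x y = k + 2 ∧ G.dist x z = k + 1 ∧ G.dist z v = 2 := by
  obtain ⟨p, hp⟩ := hG.exists_walk_length_eq_dist v x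
  rw [SimpleGraph.dist_comm (u := v) (v := x), h] at hp
  cases p with
  | nil => simp at hp
  | @cons _ y _ hadj q =>
    cases q with
    | nil => simp at hp
    | @cons _ z _ hadj2 r =>
      simp only [Walk.length_cons] at hp
      have hxy : G.dist x y ≤ k + 2 := by
        have := SimpleGraph.dist_le (Walk.cons hadj2 r).reverse
        simp only [Walk.length_reverse, Walk.length_cons] at this; omega
      have hxz : G.dist x z ≤ k + 1 := by
        have := SimpleGraph.dist_le r.reverse
        simp only [Walk.length_reverse] at this; omega
      have hzv : G.dist z v ≤ 2 := by
        have := SimpleGraph.dist_le (Walk.cons hadj (Walk.cons hadj2 Walk.nil)).reverse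
        simp only [Walk.length_reverse, Walk.length_cons, Walk.length_nil] at this; omega
      have t1 : G.dist x v ≤ G.dist x y + 1 :=
        le_trans (hG.dist_triangle (v := y)) (by have := adj_dist_le hadj.symm; omega)
      have t2 : G.dist x v ≤ G.dist x z + G.dist z v := hG.dist_triangle
      exact ⟨y, z, hadj.symm, by omega, by omega, by omega⟩



lemma C1_aux (hG : G.Connected) {v₁ v₂ v₃ x : V}
    (hnm : ∀ y, G.Adj y v₁ ∧ ¬G.Adj y v₂ → G.Adj y v₃)
    (hx1 : x ≠ v₁)
    (hlt : min (G.dist x v₁) (G.dist x v₃) < min (G.dist x v₂) (G.dist x v₃)) : False := by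
  have hd13 : G.dist x v₁ < G.dist x v₃ := by omega
  have hd12 : G.dist x v₁ < G.dist x v₂ := by omega
  obtain ⟨k, hk⟩ : ∃ k, G.dist x v₁ = k + 1 := by
    have : G.dist x v₁ ≠ 0 := fun h0 => hx1 (hG.dist_eq_zero_iff.mp h0)
    exact ⟨G.dist x v₁ - 1, by omega⟩
  obtain ⟨y, hyv, hxy⟩ := exists_pred hG hk
  have hy2 : ¬G.Adj y v₂ := fun h2 => by
    have : G.dist x v₂ ≤ G.dist x y + G.dist y v₂ := hG.dist_triangle
    have := adj_dist_le h2; omega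
  have hy3 : G.Adj y v₃ := hnm y ⟨hyv, hy2⟩
  have : G.dist x v₃ ≤ G.dist x y + G.dist y v₃ := hG.dist_triangle
  have := adj_dist_le hy3; omega

lemma C1 (hG : G.Connected) {v₁ v₂ v₃ x : V}
    (hnm : ∀ y, (G.Adj y v₁ ∧ ¬G.Adj y v₂) ∨ (G.Adj y v₂ ∧ ¬G.Adj y v₁) → G.Adj y v₃)
    (hx1 : x ≠ v₁) (hx2 : x ≠ v₂) :
    min (G.dist x v₁) (G.dist x v₃) = min (G.dist x v₂) (G.dist x v₃) := by
  by_contra h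
  rcases Ne.lt_or_gt h with h | h
  · exact C1_aux hG (fun y hy => hnm y (Or.inl hy)) hx1 h
  · exact C1_aux hG (fun y hy => hnm y (Or.inr hy)) hx2 h

lemma C2_aux (hG : G.Connected) {u v₁ v₂ v₃ x : V}
    (hu1 : G.Adj u v₁)
    (hnm : ∀ y, y ≠ v₁ → y ≠ v₂ → y ≠ v₃ → G.Adj y v₁ ∧ ¬G.Adj y v₂ → G.Adj y u)
    (hd2 : ∀ y, y ≠ v₁ → y ≠ v₂ → y ≠ v₃ → G.dist y v₁ < G.dist y v₂ → G.dist y v₁ = 2 →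
      G.dist y u ≤ 2)
    (hx1 : x ≠ v₁) (hx2 : x ≠ v₂) (hx3 : x ≠ v₃)
    (hlt : min (G.dist x u) (G.dist x v₁) < min (G.dist x u) (G.dist x v₂)) : False := by
  have hd1u : G.dist x v₁ < G.dist x u := by omega
  have hd12 : G.dist x v₁ < G.dist x v₂ := by omega
  have hule : G.dist x u ≤ G.dist x v₁ + 1 := by
    have : G.dist x u ≤ G.dist x v₁ + G.dist v₁ u := hG.dist_triangle
    have := adj_dist_le hu1.symm; omega
  have hu_eq : G.dist x u = G.dist x v₁ + 1 := by omega
  have hne0 : G.dist x v₁ ≠ 0 := fun h0 => hx1 (hG.dist_eq_zero_iff.mp h0)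
  rcases Nat.lt_or_ge (G.dist x v₁) 3 with hsmall | hbig
  · rcases (show G.dist x v₁ = 1 ∨ G.dist x v₁ = 2 from by omega) with h1 | h1
    · -- dist x v₁ = 1
      have hadj1 : G.Adj x v₁ := dist_eq_one_iff_adj.mp h1
      have hnadj2 : ¬G.Adj x v₂ := fun h2 => by
        have := (dist_eq_one_iff_adj.mpr h2); omega
      have := adj_dist_le (hnm x hx1 hx2 hx3 ⟨hadj1, hnadj2⟩)
      omega
    · -- dist x v₁ = 2
      have := hd2 x hx1 hx2 hx3 hd12 h1
      omega
  · obtain ⟨k, hk⟩ : ∃ k, G.dist x v₁ = k + 3 := ⟨G.dist x v₁ - 3, by omega⟩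
    obtain ⟨y, z, hyv, hxy, hxz, hzv⟩ := exists_pred2 hG hk
    have hxzu : G.dist x u ≤ G.dist x z + G.dist z u := hG.dist_triangle
    have hxv2z : G.dist x v₂ ≤ G.dist x z + G.dist z v₂ := hG.dist_triangle
    by_cases hz3 : z = v₃
    · have hy1 : y ≠ v₁ := fun h => by rw [h] at hxy; omega
      have hy2 : y ≠ v₂ := fun h => by rw [h] at hxy; omega
      have hy3 : y ≠ v₃ := fun h => by rw [h, ← hz3] at hxy; omega
      have hynadj2 : ¬G.Adj y v₂ := fun h2 => by
        have : G.dist x v₂ ≤ G.dist x y + G.dist y v₂ := hG.dist_triangle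
        have := adj_dist_le h2; omega
      have := adj_dist_le (hnm y hy1 hy2 hy3 ⟨hyv, hynadj2⟩)
      have : G.dist x u ≤ G.dist x y + G.dist y u := hG.dist_triangle
      omega
    · have hz1 : z ≠ v₁ := fun h => by rw [h, SimpleGraph.dist_self] at hzv; omega
      have hz2 : z ≠ v₂ := fun h => by rw [h] at hxz; omega
      have hzlt : G.dist z v₁ < G.dist z v₂ := by omega
      have := hd2 z hz1 hz2 hz3 hzlt hzv
      omega

lemma C2 (hG : G.Connected) {u v₁ v₂ v₃ x : V}
    (hu1 : G.Adj u v₁) (hu2 : G.Adj u v₂)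
    (hnm : ∀ y, y ≠ v₁ ∧ y ≠ v₂ ∧ y ≠ v₃ →
      (G.Adj y v₁ ∧ ¬G.Adj y v₂) ∨ (G.Adj y v₂ ∧ ¬G.Adj y v₁) → G.Adj y u)
    (hd : ∀ y, y ≠ v₁ ∧ y ≠ v₂ ∧ y ≠ v₃ →
      (G.dist y v₁ < G.dist y v₂ ∧ G.dist y v₁ = 2) ∨
        (G.dist y v₂ < G.dist y v₁ ∧ G.dist y v₂ = 2) → G.dist y u ≤ 2)
    (hx1 : x ≠ v₁) (hx2 : x ≠ v₂) (hx3 : x ≠ v₃) :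
    min (G.dist x u) (G.dist x v₁) = min (G.dist x u) (G.dist x v₂) := by
  by_contra h
  rcases Ne.lt_or_gt h with h | h
  · exact C2_aux hG hu1 (fun y h1 h2 h3 hy => hnm y ⟨h1, h2, h3⟩ (Or.inl hy))
      (fun y h1 h2 h3 hlt he => hd y ⟨h1, h2, h3⟩ (Or.inl ⟨hlt, he⟩)) hx1 hx2 hx3 h
  · exact C2_aux hG hu2 (fun y h1 h2 h3 hy => hnm y ⟨h2, h1, h3⟩ (Or.inr hy))
      (fun y h1 h2 h3 hlt he => hd y ⟨h2, h1, h3⟩ (Or.inr ⟨hlt, he⟩)) hx2 hx1 hx3 h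



lemma dist_ge2 (hG : G.Connected) {x v : V} (hne : x ≠ v) (hnadj : ¬G.Adj x v) :
    2 ≤ G.dist x v := by
  have h0 : G.dist x v ≠ 0 := fun h => hne (hG.dist_eq_zero_iff.mp h)
  have h1 : G.dist x v ≠ 1 := fun h => hnadj (dist_eq_one_iff_adj.mp h)
  omega

lemma F2a (hG : G.Connected) {u v₁ v₂ x : V} (hu2 : G.Adj u v₂)
    (heq : min (G.dist x u) (G.dist x v₁) = min (G.dist x u) (G.dist x v₂))
    (hx2 : x ≠ v₂) (hadj1 : G.Adj x v₁) (hnadj2 : ¬G.Adj x v₂) : G.Adj x u := by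
  by_contra hxu
  have hxune : x ≠ u := fun h => hnadj2 (h ▸ hu2)
  have h1 := dist_eq_one_iff_adj.mpr hadj1
  have h2 := dist_ge2 hG hx2 hnadj2
  have h3 := dist_ge2 hG hxune hxu
  omega

lemma F2b {u v₁ v₂ x : V}
    (heq : min (G.dist x u) (G.dist x v₁) = min (G.dist x u) (G.dist x v₂))
    (h1 : G.dist x v₁ = 2) (h12 : G.dist x v₁ < G.dist x v₂) : G.dist x u ≤ 2 := by
  omega

lemma triple_helper {a b c p q : V} (hab : a ≠ b) (hac : a ≠ c) (hbc : b ≠ c)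
    (hp : p = a ∨ p = b ∨ p = c) (hq : q = a ∨ q = b ∨ q = c) (hpq : p ≠ q) :
    ∃ r, (r = a ∨ r = b ∨ r = c) ∧ p ≠ r ∧ q ≠ r ∧ ({p, q, r} : Set V) = {a, b, c} := by
  rcases hp with rfl | rfl | rfl <;> rcases hq with rfl | rfl | rfl
  · exact absurd rfl hpq
  · exact ⟨c, by tauto, by tauto, by tauto, rfl⟩
  · exact ⟨b, by tauto, by tauto, by tauto, by ext x; simp; tauto⟩
  · exact ⟨c, by tauto, by tauto, by tauto, by ext x; simp; tauto⟩
  · exact absurd rfl hpq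
  · exact ⟨a, by tauto, by tauto, by tauto, by ext x; simp; tauto⟩
  · exact ⟨b, by tauto, by tauto, by tauto, by ext x; simp; tauto⟩
  · exact ⟨a, by tauto, by tauto, by tauto, by ext x; simp; tauto⟩
  · exact absurd rfl hpq


lemma evd_eq (x y v : V) :
    edgeVertexDist G s(x, y) v = min (G.dist v x) (G.dist v y) := by
  show min (G.dist x v) (G.dist y v) = _
  rw [SimpleGraph.dist_comm (u := x) (v := v), SimpleGraph.dist_comm (u := y) (v := v)]

lemma main_shared (hG : G.Connected) {a b c u p q : V}
    (hab : a ≠ b) (hac : a ≠ c) (hbc : b ≠ c)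
    (hup : G.Adj u p) (huq : G.Adj u q) (hpq : p ≠ q)
    (hp : p = a ∨ p = b ∨ p = c) (hq : q = a ∨ q = b ∨ q = c)
    (key : ∀ s, s ≠ a → s ≠ b → s ≠ c →
      min (G.dist s u) (G.dist s p) = min (G.dist s u) (G.dist s q)) :
    ∃ v₁ v₂ v₃ : V, ({v₁, v₂, v₃} : Set V) = {a, b, c} ∧
      ((G.Adj v₁ v₃ ∧ G.Adj v₂ v₃ ∧
          ∀ x : V, ((G.Adj x v₁ ∧ ¬G.Adj x v₂) ∨ (G.Adj x v₂ ∧ ¬G.Adj x v₁)) →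
            G.Adj x v₃) ∨
        (∃ u : V, u ∉ ({v₁, v₂, v₃} : Set V) ∧ G.Adj u v₁ ∧ G.Adj u v₂ ∧
          (∀ x : V, x ∉ ({v₁, v₂, v₃} : Set V) →
            ((G.Adj x v₁ ∧ ¬G.Adj x v₂) ∨ (G.Adj x v₂ ∧ ¬G.Adj x v₁)) →
            G.Adj x u) ∧
          (∀ x : V, x ∉ ({v₁, v₂, v₃} : Set V) →
            ((G.dist x v₁ < G.dist x v₂ ∧ G.dist x v₁ = 2) ∨
              (G.dist x v₂ < G.dist x v₁ ∧ G.dist x v₂ = 2)) →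
            G.dist x u ≤ 2))) := by
  obtain ⟨r, hr, hpr, hqr, hset⟩ := triple_helper hab hac hbc hp hq hpq
  have memiff : ∀ x : V, x ≠ p → x ≠ q → x ≠ r → (x ≠ a ∧ x ≠ b ∧ x ≠ c) := by
    intro x h1 h2 h3
    have hx : x ∉ ({p, q, r} : Set V) := by simp; tauto
    rw [hset] at hx
    simp at hx
    tauto
  by_cases hu : u = a ∨ u = b ∨ u = c
  · have hur : u = r := by
      have hmem : u ∈ ({p, q, r} : Set V) := hset ▸ (by simpa using hu)
      simp at hmem
      rcases hmem with h | h | h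
      · exact absurd h hup.ne
      · exact absurd h huq.ne
      · exact h
    subst hur
    refine ⟨p, q, u, hset, Or.inl ⟨hup.symm, huq.symm, ?_⟩⟩
    intro x hx
    by_cases hxp : x = p
    · subst hxp
      rcases hx with ⟨h1, _⟩ | ⟨_, _⟩
      · exact (h1.ne rfl).elim
      · exact hup.symm
    · by_cases hxq : x = q
      · subst hxq
        rcases hx with ⟨_, _⟩ | ⟨h1, _⟩
        · exact huq.symm
        · exact (h1.ne rfl).elim
      · by_cases hxr : x = u
        · subst hxr
          rcases hx with ⟨_, h2⟩ | ⟨_, h2⟩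
          · exact absurd huq h2
          · exact absurd hup h2
        · obtain ⟨ha', hb', hc'⟩ := memiff x hxp hxq hxr
          rcases hx with ⟨h1, h2⟩ | ⟨h1, h2⟩
          · exact F2a hG huq (key x ha' hb' hc') hxq h1 h2
          · exact F2a hG hup (key x ha' hb' hc').symm hxp h1 h2
  · push_neg at hu
    obtain ⟨hua, hub, huc⟩ := hu
    have hur : u ≠ r := by rcases hr with rfl | rfl | rfl <;> tauto
    refine ⟨p, q, r, hset, Or.inr ⟨u, ?_, hup, huq, ?_, ?_⟩⟩
    · simp
      push_neg
      exact ⟨hup.ne, huq.ne, hur⟩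
    · intro x hx hcase
      simp at hx
      push_neg at hx
      obtain ⟨hxp, hxq, hxr⟩ := hx
      obtain ⟨ha', hb', hc'⟩ := memiff x hxp hxq hxr
      rcases hcase with ⟨h1, h2⟩ | ⟨h1, h2⟩
      · exact F2a hG huq (key x ha' hb' hc') hxq h1 h2
      · exact F2a hG hup (key x ha' hb' hc').symm hxp h1 h2
    · intro x hx hcase
      simp at hx
      push_neg at hx
      obtain ⟨hxp, hxq, hxr⟩ := hx
      obtain ⟨ha', hb', hc'⟩ := memiff x hxp hxq hxr
      rcases hcase with ⟨h1, h2⟩ | ⟨h1, h2⟩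
      · exact F2b (key x ha' hb' hc') h2 h1
      · exact F2b (key x ha' hb' hc').symm h2 h1


lemma forward (hG : G.Connected) {a b c : V} (hab : a ≠ b) (hac : a ≠ c) (hbc : b ≠ c)
    (h : ¬ IsEdgeResolvingSet G {x : V | x ≠ a ∧ x ≠ b ∧ x ≠ c}) :
    ∃ v₁ v₂ v₃ : V, ({v₁, v₂, v₃} : Set V) = {a, b, c} ∧
      ((G.Adj v₁ v₃ ∧ G.Adj v₂ v₃ ∧
          ∀ x : V, ((G.Adj x v₁ ∧ ¬G.Adj x v₂) ∨ (G.Adj x v₂ ∧ ¬G.Adj x v₁)) →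
            G.Adj x v₃) ∨
        (∃ u : V, u ∉ ({v₁, v₂, v₃} : Set V) ∧ G.Adj u v₁ ∧ G.Adj u v₂ ∧
          (∀ x : V, x ∉ ({v₁, v₂, v₃} : Set V) →
            ((G.Adj x v₁ ∧ ¬G.Adj x v₂) ∨ (G.Adj x v₂ ∧ ¬G.Adj x v₁)) →
            G.Adj x u) ∧
          (∀ x : V, x ∉ ({v₁, v₂, v₃} : Set V) →
            ((G.dist x v₁ < G.dist x v₂ ∧ G.dist x v₁ = 2) ∨
              (G.dist x v₂ < G.dist x v₁ ∧ G.dist x v₂ = 2)) →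
            G.dist x u ≤ 2))) := by
  classical
  rw [IsEdgeResolvingSet] at h
  push_neg at h
  obtain ⟨e, he, f, hf, heq, hne⟩ := h
  obtain ⟨⟨p₁, p₂⟩, rfl⟩ := e.exists_rep
  obtain ⟨⟨q₁, q₂⟩, rfl⟩ := f.exists_rep
  have hadj_e : G.Adj p₁ p₂ := he
  have hadj_f : G.Adj q₁ q₂ := hf
  have hne12 : p₁ ≠ p₂ := hadj_e.ne
  have hneq12 : q₁ ≠ q₂ := hadj_f.ne
  have key : ∀ s, s ≠ a → s ≠ b → s ≠ c →
      min (G.dist s p₁) (G.dist s p₂) = min (G.dist s q₁) (G.dist s q₂) := by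
    intro s h1 h2 h3
    have := heq s ⟨h1, h2, h3⟩
    rwa [evd_eq, evd_eq] at this
  have trans1 : ∀ s, s ≠ a → s ≠ b → s ≠ c → (s = p₁ ∨ s = p₂) → (s = q₁ ∨ s = q₂) := by
    intro s h1 h2 h3 hs
    have hk := key s h1 h2 h3
    have hz : min (G.dist s p₁) (G.dist s p₂) = 0 := by
      rcases hs with rfl | rfl <;> simp [SimpleGraph.dist_self]
    have : G.dist s q₁ = 0 ∨ G.dist s q₂ = 0 := by omega
    rcases this with h | h
    · exact Or.inl (hG.dist_eq_zero_iff.mp h)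
    · exact Or.inr (hG.dist_eq_zero_iff.mp h)
  have trans2 : ∀ s, s ≠ a → s ≠ b → s ≠ c → (s = q₁ ∨ s = q₂) → (s = p₁ ∨ s = p₂) := by
    intro s h1 h2 h3 hs
    have hk := key s h1 h2 h3
    have hz : min (G.dist s q₁) (G.dist s q₂) = 0 := by
      rcases hs with rfl | rfl <;> simp [SimpleGraph.dist_self]
    have : G.dist s p₁ = 0 ∨ G.dist s p₂ = 0 := by omega
    rcases this with h | h
    · exact Or.inl (hG.dist_eq_zero_iff.mp h)
    · exact Or.inr (hG.dist_eq_zero_iff.mp h)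
  by_cases h11 : p₁ = q₁
  · subst h11
    have hpq : p₂ ≠ q₂ := fun h => hne (by rw [h])
    have hp : p₂ = a ∨ p₂ = b ∨ p₂ = c := by
      by_contra hcon; push_neg at hcon
      rcases trans1 p₂ hcon.1 hcon.2.1 hcon.2.2 (Or.inr rfl) with h | h
      · exact hne12 h.symm
      · exact hpq h
    have hq : q₂ = a ∨ q₂ = b ∨ q₂ = c := by
      by_contra hcon; push_neg at hcon
      rcases trans2 q₂ hcon.1 hcon.2.1 hcon.2.2 (Or.inr rfl) with h | h
      · exact hneq12 h.symm
      · exact hpq h.symm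
    exact main_shared hG hab hac hbc hadj_e hadj_f hpq hp hq
      (fun s h1 h2 h3 => by have := key s h1 h2 h3; omega)
  · by_cases h12 : p₁ = q₂
    · subst h12
      have hpq : p₂ ≠ q₁ := fun h => hne (by rw [h]; exact Sym2.eq_swap)
      have hp : p₂ = a ∨ p₂ = b ∨ p₂ = c := by
        by_contra hcon; push_neg at hcon
        rcases trans1 p₂ hcon.1 hcon.2.1 hcon.2.2 (Or.inr rfl) with h | h
        · exact hpq h
        · exact hne12 h.symm
      have hq : q₁ = a ∨ q₁ = b ∨ q₁ = c := by
        by_contra hcon; push_neg at hcon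
        rcases trans2 q₁ hcon.1 hcon.2.1 hcon.2.2 (Or.inl rfl) with h | h
        · exact h11 h.symm
        · exact hpq h.symm
      exact main_shared hG hab hac hbc hadj_e hadj_f.symm hpq hp hq
        (fun s h1 h2 h3 => by have := key s h1 h2 h3; omega)
    · by_cases h21 : p₂ = q₁
      · subst h21
        have hpq : p₁ ≠ q₂ := h12
        have hp : p₁ = a ∨ p₁ = b ∨ p₁ = c := by
          by_contra hcon; push_neg at hcon
          rcases trans1 p₁ hcon.1 hcon.2.1 hcon.2.2 (Or.inl rfl) with h | h
          · exact h11 h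
          · exact h12 h
        have hq : q₂ = a ∨ q₂ = b ∨ q₂ = c := by
          by_contra hcon; push_neg at hcon
          rcases trans2 q₂ hcon.1 hcon.2.1 hcon.2.2 (Or.inr rfl) with h | h
          · exact h12 h.symm
          · exact hneq12 h.symm
        exact main_shared hG hab hac hbc hadj_e.symm hadj_f hpq hp hq
          (fun s h1 h2 h3 => by have := key s h1 h2 h3; omega)
      · by_cases h22 : p₂ = q₂
        · subst h22
          have hpq : p₁ ≠ q₁ := h11
          have hp : p₁ = a ∨ p₁ = b ∨ p₁ = c := by
            by_contra hcon; push_neg at hcon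
            rcases trans1 p₁ hcon.1 hcon.2.1 hcon.2.2 (Or.inl rfl) with h | h
            · exact h11 h
            · exact h12 h
          have hq : q₁ = a ∨ q₁ = b ∨ q₁ = c := by
            by_contra hcon; push_neg at hcon
            rcases trans2 q₁ hcon.1 hcon.2.1 hcon.2.2 (Or.inl rfl) with h | h
            · exact h11 h.symm
            · exact h21 h.symm
          exact main_shared hG hab hac hbc hadj_e.symm hadj_f.symm hpq hp hq
            (fun s h1 h2 h3 => by have := key s h1 h2 h3; omega)
        · exfalso
          have hpa : p₁ = a ∨ p₁ = b ∨ p₁ = c := by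
            by_contra hcon; push_neg at hcon
            rcases trans1 p₁ hcon.1 hcon.2.1 hcon.2.2 (Or.inl rfl) with h | h
            exacts [h11 h, h12 h]
          have hpb : p₂ = a ∨ p₂ = b ∨ p₂ = c := by
            by_contra hcon; push_neg at hcon
            rcases trans1 p₂ hcon.1 hcon.2.1 hcon.2.2 (Or.inr rfl) with h | h
            exacts [h21 h, h22 h]
          have hqa : q₁ = a ∨ q₁ = b ∨ q₁ = c := by
            by_contra hcon; push_neg at hcon
            rcases trans2 q₁ hcon.1 hcon.2.1 hcon.2.2 (Or.inl rfl) with h | h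
            exacts [h11 h.symm, h21 h.symm]
          have hqb : q₂ = a ∨ q₂ = b ∨ q₂ = c := by
            by_contra hcon; push_neg at hcon
            rcases trans2 q₂ hcon.1 hcon.2.1 hcon.2.2 (Or.inr rfl) with h | h
            exacts [h12 h.symm, h22 h.symm]
          have hsub : ({p₁, p₂, q₁, q₂} : Finset V) ⊆ {a, b, c} := by
            intro x hx
            simp only [Finset.mem_insert, Finset.mem_singleton] at hx ⊢
            rcases hx with rfl | rfl | rfl | rfl <;> tauto
          have hcard4 : ({p₁, p₂, q₁, q₂} : Finset V).card = 4 := by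
            rw [Finset.card_insert_of_notMem (by simp; push_neg; exact ⟨hne12, h11, h12⟩),
                Finset.card_insert_of_notMem (by simp; push_neg; exact ⟨h21, h22⟩),
                Finset.card_insert_of_notMem (by simpa using hneq12), Finset.card_singleton]
          have hcard3 : ({a, b, c} : Finset V).card ≤ 3 := by
            have h1 := Finset.card_insert_le a ({b, c} : Finset V)
            have h2 := Finset.card_insert_le b ({c} : Finset V)
            simp only [Finset.card_singleton] at *
            omega
          have := Finset.card_le_card hsub
          omega


lemma backward (hG : G.Connected) {a b c : V} (hab : a ≠ b) (hac : a ≠ c) (hbc : b ≠ c)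
    (hcond : ∃ v₁ v₂ v₃ : V, ({v₁, v₂, v₃} : Set V) = {a, b, c} ∧
      ((G.Adj v₁ v₃ ∧ G.Adj v₂ v₃ ∧
          ∀ x : V, ((G.Adj x v₁ ∧ ¬G.Adj x v₂) ∨ (G.Adj x v₂ ∧ ¬G.Adj x v₁)) →
            G.Adj x v₃) ∨
        (∃ u : V, u ∉ ({v₁, v₂, v₃} : Set V) ∧ G.Adj u v₁ ∧ G.Adj u v₂ ∧
          (∀ x : V, x ∉ ({v₁, v₂, v₃} : Set V) →
            ((G.Adj x v₁ ∧ ¬G.Adj x v₂) ∨ (G.Adj x v₂ ∧ ¬G.Adj x v₁)) →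
            G.Adj x u) ∧
          (∀ x : V, x ∉ ({v₁, v₂, v₃} : Set V) →
            ((G.dist x v₁ < G.dist x v₂ ∧ G.dist x v₁ = 2) ∨
              (G.dist x v₂ < G.dist x v₁ ∧ G.dist x v₂ = 2)) →
            G.dist x u ≤ 2)))) :
    ¬ IsEdgeResolvingSet G {x : V | x ≠ a ∧ x ≠ b ∧ x ≠ c} := by
  obtain ⟨v₁, v₂, v₃, hset, hcase⟩ := hcond
  have habc : ∀ y : V, y = a ∨ y = b ∨ y = c → y = v₁ ∨ y = v₂ ∨ y = v₃ := by
    intro y hy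
    have : y ∈ ({a, b, c} : Set V) := by simpa using hy
    rw [← hset] at this
    simpa using this
  have hmem : ∀ x : V, (x ≠ a ∧ x ≠ b ∧ x ≠ c) → x ≠ v₁ ∧ x ≠ v₂ ∧ x ≠ v₃ := by
    intro x hx
    have h1 : x ∉ ({a, b, c} : Set V) := by simp; tauto
    rw [← hset] at h1
    simp at h1
    tauto
  have hv12 : v₁ ≠ v₂ := by
    intro h12
    have ha' : a = v₂ ∨ a = v₃ := by
      rcases habc a (Or.inl rfl) with h | h | h
      exacts [Or.inl (h.trans h12), Or.inl h, Or.inr h]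
    have hb' : b = v₂ ∨ b = v₃ := by
      rcases habc b (Or.inr (Or.inl rfl)) with h | h | h
      exacts [Or.inl (h.trans h12), Or.inl h, Or.inr h]
    have hc' : c = v₂ ∨ c = v₃ := by
      rcases habc c (Or.inr (Or.inr rfl)) with h | h | h
      exacts [Or.inl (h.trans h12), Or.inl h, Or.inr h]
    rcases ha' with rfl | rfl <;> rcases hb' with h | h <;> rcases hc' with h' | h' <;>
      simp_all
  intro hres
  rcases hcase with ⟨h13, h23, hnm⟩ | ⟨u, hu, hu1, hu2, hnm, hd⟩
  · have heq : s(v₁, v₃) = s(v₂, v₃) := by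
      refine hres _ (G.mem_edgeSet.mpr h13) _ (G.mem_edgeSet.mpr h23) ?_
      intro s hs
      obtain ⟨hs1, hs2, hs3⟩ := hmem s hs
      rw [evd_eq, evd_eq]
      exact C1 hG hnm hs1 hs2
    rw [Sym2.eq_iff] at heq
    rcases heq with ⟨h, _⟩ | ⟨h, _⟩
    · exact hv12 h
    · exact h13.ne h
  · simp only [Set.mem_insert_iff, Set.mem_singleton_iff] at hu
    push_neg at hu
    have hnm' : ∀ y, y ≠ v₁ ∧ y ≠ v₂ ∧ y ≠ v₃ →
        (G.Adj y v₁ ∧ ¬G.Adj y v₂) ∨ (G.Adj y v₂ ∧ ¬G.Adj y v₁) → G.Adj y u := by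
      intro y hy
      exact hnm y (by simp; tauto)
    have hd' : ∀ y, y ≠ v₁ ∧ y ≠ v₂ ∧ y ≠ v₃ →
        (G.dist y v₁ < G.dist y v₂ ∧ G.dist y v₁ = 2) ∨
          (G.dist y v₂ < G.dist y v₁ ∧ G.dist y v₂ = 2) → G.dist y u ≤ 2 := by
      intro y hy
      exact hd y (by simp; tauto)
    have heq : s(u, v₁) = s(u, v₂) := by
      refine hres _ (G.mem_edgeSet.mpr hu1) _ (G.mem_edgeSet.mpr hu2) ?_
      intro s hs
      obtain ⟨hs1, hs2, hs3⟩ := hmem s hs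
      rw [evd_eq, evd_eq]
      exact C2 hG hu1 hu2 hnm' hd' hs1 hs2 hs3
    rw [Sym2.eq_iff] at heq
    rcases heq with ⟨_, h⟩ | ⟨h, _⟩
    · exact hv12 h
    · exact hu.2.1 h

lemma resolving_mono {S T : Set V} (hST : S ⊆ T) (h : IsEdgeResolvingSet G S) :
    IsEdgeResolvingSet G T :=
  fun e he f hf heq => h e he f hf fun s hs => heq s (hST hs)

lemma univ_resolving (hG : G.Connected) : IsEdgeResolvingSet G (Set.univ : Set V) := by
  intro e he f hf h
  obtain ⟨⟨x, y⟩, rfl⟩ := e.exists_rep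
  obtain ⟨⟨z, w⟩, rfl⟩ := f.exists_rep
  have hxy : G.Adj x y := he
  have hzw : G.Adj z w := hf
  have h1 := h x (Set.mem_univ x)
  have h2 := h y (Set.mem_univ y)
  rw [evd_eq, evd_eq] at h1 h2
  have e1 : min (G.dist x z) (G.dist x w) = 0 := by
    rw [← h1]; simp [SimpleGraph.dist_self]
  have e2 : min (G.dist y z) (G.dist y w) = 0 := by
    rw [← h2]; simp [SimpleGraph.dist_self]
  have hx : z = x ∨ w = x := by
    have : G.dist x z = 0 ∨ G.dist x w = 0 := by omega
    rcases this with h' | h'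
    · exact Or.inl (hG.dist_eq_zero_iff.mp h').symm
    · exact Or.inr (hG.dist_eq_zero_iff.mp h').symm
  have hy : z = y ∨ w = y := by
    have : G.dist y z = 0 ∨ G.dist y w = 0 := by omega
    rcases this with h' | h'
    · exact Or.inl (hG.dist_eq_zero_iff.mp h').symm
    · exact Or.inr (hG.dist_eq_zero_iff.mp h').symm
  rw [Sym2.eq_iff]
  rcases hx with rfl | rfl <;> rcases hy with h' | h' <;> first
    | (exact absurd h' hzw.ne)
    | (exact absurd h' hxy.ne)
    | (exact absurd h'.symm hxy.ne)
    | tauto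

lemma edim_iff [Fintype V] (hG : G.Connected) :
    Fintype.card V - 2 ≤ edgeMetricDim G ↔
      ∀ a b c : V, a ≠ b → a ≠ c → b ≠ c →
        ¬ IsEdgeResolvingSet G {x : V | x ≠ a ∧ x ≠ b ∧ x ≠ c} := by
  classical
  constructor
  · intro hle a b c hab hac hbc hres
    have hcard3 : ({a, b, c} : Finset V).card = 3 := by
      rw [Finset.card_insert_of_notMem (by simp [hab, hac]),
        Finset.card_insert_of_notMem (by simp [hbc]), Finset.card_singleton]
    have hn : 3 ≤ Fintype.card V := hcard3 ▸ Finset.card_le_univ _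
    have hS : IsEdgeResolvingSet G ↑(({a, b, c} : Finset V)ᶜ) := by
      have hcoe : (↑(({a, b, c} : Finset V)ᶜ) : Set V) = {x | x ≠ a ∧ x ≠ b ∧ x ≠ c} := by
        ext x; simp; tauto
      rw [hcoe]; exact hres
    have hle2 : edgeMetricDim G ≤ Fintype.card V - 3 :=
      Nat.sInf_le ⟨(({a, b, c} : Finset V)ᶜ), by rw [Finset.card_compl, hcard3], hS⟩
    omega
  · intro h
    by_contra hlt
    push_neg at hlt
    have hne : {k | ∃ S : Finset V, S.card = k ∧ IsEdgeResolvingSet G (S : Set V)}.Nonempty :=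
      ⟨Fintype.card V, Finset.univ, by simp, by simpa using univ_resolving hG⟩
    obtain ⟨S, hScard, hSres⟩ := Nat.sInf_mem hne
    have hSlt : S.card < Fintype.card V - 2 := by
      rw [hScard]; exact hlt
    have h3 : 3 ≤ Sᶜ.card := by
      rw [Finset.card_compl]
      have := Finset.card_le_univ S
      omega
    obtain ⟨t, hts, htc⟩ := Finset.exists_subset_card_eq h3
    obtain ⟨a, b, c, hab, hac, hbc, rfl⟩ := Finset.card_eq_three.mp htc
    refine h a b c hab hac hbc (resolving_mono ?_ hSres)
    intro x hx
    have hxS : x ∈ S := hx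
    have hnot : x ∉ ({a, b, c} : Finset V) := fun hmem => by
      have := hts hmem
      simp at this
      exact this hxS
    simp only [Finset.mem_insert, Finset.mem_singleton] at hnot
    push_neg at hnot
    exact hnot

end AuxEdim

/-- Characterization of connected `n`-vertex graphs with `edim(G) ≥ n - 2`. -/
theorem stmt_17 {V : Type*} [Fintype V] (G : SimpleGraph V) (hG : G.Connected) :
    Fintype.card V - 2 ≤ edgeMetricDim G ↔
      ∀ a b c : V, a ≠ b → a ≠ c → b ≠ c →
        ∃ v₁ v₂ v₃ : V, ({v₁, v₂, v₃} : Set V) = {a, b, c} ∧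
          ((G.Adj v₁ v₃ ∧ G.Adj v₂ v₃ ∧
              ∀ x : V, ((G.Adj x v₁ ∧ ¬G.Adj x v₂) ∨ (G.Adj x v₂ ∧ ¬G.Adj x v₁)) →
                G.Adj x v₃) ∨
            (∃ u : V, u ∉ ({v₁, v₂, v₃} : Set V) ∧ G.Adj u v₁ ∧ G.Adj u v₂ ∧
              (∀ x : V, x ∉ ({v₁, v₂, v₃} : Set V) →
                ((G.Adj x v₁ ∧ ¬G.Adj x v₂) ∨ (G.Adj x v₂ ∧ ¬G.Adj x v₁)) →
                G.Adj x u) ∧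
              (∀ x : V, x ∉ ({v₁, v₂, v₃} : Set V) →
                ((G.dist x v₁ < G.dist x v₂ ∧ G.dist x v₁ = 2) ∨
                  (G.dist x v₂ < G.dist x v₁ ∧ G.dist x v₂ = 2)) →
                G.dist x u ≤ 2))) := by
  rw [edim_iff hG]
  constructor
  · intro h a b c hab hac hbc
    exact forward hG hab hac hbc (h a b c hab hac hbc)
  · intro h a b c hab hac hbc
    exact backward hG hab hac hbc (h a b c hab hac hbc)
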